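/- Let S : ℂ^{2n} → ℂ^{2n} be a linear symplectic operator. Then S is stable (i.e., the family of powers {S^n : n ≥ 1} is uniformly bounded in a neighborhood of 0) if and only if S is diagonalizable and all eigenvalues of S have absolute value 1. -/

import Mathlib

open Complex

/-- Model of standard complex symplectic space ℂ^{2n}: pairs (p, q) with p, q ∈ ℂ^n. -/
abbrev SympC (n : ℕ) := (Fin n → ℂ) × (Fin n → ℂ)

/-- The standard symplectic bilinear form on ℂ^{2n}. -/
noncomputable def omegaStd {n : ℕ} (x y : SympC n) : ℂ :=
  ∑ i, (x.1 i * y.2 i - x.2 i * y.1 i)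

/-- Stability of a linear operator: powers uniformly bounded near 0. -/
def IsStableOp {n : ℕ} (S : Module.End ℂ (SympC n)) : Prop :=
  ∀ ε > (0 : ℝ), ∃ δ > (0 : ℝ), ∀ x : SympC n, ‖x‖ < δ →
    ∀ m : ℕ, 0 < m → ‖(S ^ m) x‖ < ε

-- bilinearity lemmas
lemma omega_zero_left {n : ℕ} (y : SympC n) : omegaStd (0 : SympC n) y = 0 := by
  simp [omegaStd]

lemma omega_smul_left {n : ℕ} (a : ℂ) (x y : SympC n) :
    omegaStd (a • x) y = a * omegaStd x y := by
  simp only [omegaStd, Finset.mul_sum]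
  refine Finset.sum_congr rfl fun i _ => ?_
  simp [Prod.smul_fst, Prod.smul_snd, Pi.smul_apply, smul_eq_mul]
  ring

lemma omega_smul_right {n : ℕ} (a : ℂ) (x y : SympC n) :
    omegaStd x (a • y) = a * omegaStd x y := by
  simp only [omegaStd, Finset.mul_sum]
  refine Finset.sum_congr rfl fun i _ => ?_
  simp [Prod.smul_fst, Prod.smul_snd, Pi.smul_apply, smul_eq_mul]
  ring

lemma omega_sub_right {n : ℕ} (x y z : SympC n) :
    omegaStd x (y - z) = omegaStd x y - omegaStd x z := by
  simp only [omegaStd, ← Finset.sum_sub_distrib]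
  refine Finset.sum_congr rfl fun i _ => ?_
  simp [Prod.fst_sub, Prod.snd_sub, Pi.sub_apply]
  ring

lemma omega_nondeg {n : ℕ} (x : SympC n) (h : ∀ y, omegaStd x y = 0) : x = 0 := by
  have h1 : ∀ i, x.1 i = 0 := by
    intro i
    have := h (0, Pi.single i 1)
    simpa [omegaStd, Pi.single_apply, Finset.sum_ite_eq', mul_ite] using this
  have h2 : ∀ i, x.2 i = 0 := by
    intro i
    have := h (Pi.single i 1, 0)
    simp [omegaStd, Pi.single_apply, Finset.sum_ite_eq', mul_ite] at this
    simpa using this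
  ext i <;> simp [h1, h2]


lemma pow_apply_eigen {n : ℕ} (S : Module.End ℂ (SympC n)) {σ : ℂ} {v : SympC n}
    (hv : S v = σ • v) (m : ℕ) : (S ^ m) v = σ ^ m • v := by
  induction m with
  | zero => simp
  | succ k ih =>
      rw [pow_succ, Module.End.mul_apply, hv, map_smul, ih, smul_smul, pow_succ]
      ring_nf

lemma stable_abs_le_one {n : ℕ} {S : Module.End ℂ (SympC n)} (hS : IsStableOp S)
    {σ : ℂ} (hσ : Module.End.HasEigenvalue S σ) : ‖σ‖ ≤ 1 := by
  by_contra h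
  push_neg at h
  obtain ⟨v, hv, hv0⟩ := hσ.exists_hasEigenvector
  have hvS : S v = σ • v := Module.End.mem_eigenspace_iff.mp hv
  obtain ⟨δ, hδ, hst⟩ := hS 1 one_pos
  have hvn : (0:ℝ) < ‖v‖ := norm_pos_iff.mpr hv0
  set c : ℂ := ((δ / (2 * ‖v‖) : ℝ) : ℂ) with hc
  set u : SympC n := c • v with hu
  have hcabs : ‖c‖ = δ / (2 * ‖v‖) := by
    rw [hc, Complex.norm_real, Real.norm_eq_abs, abs_of_pos (div_pos hδ (by positivity))]
  have hun : ‖u‖ = δ / 2 := by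
    rw [hu, norm_smul, hcabs]
    field_simp
  have huδ : ‖u‖ < δ := by rw [hun]; linarith
  have huS : S u = σ • u := by rw [hu, map_smul, hvS, smul_comm]
  have hun0 : (0:ℝ) < ‖u‖ := by rw [hun]; positivity
  obtain ⟨m, hm⟩ := pow_unbounded_of_one_lt (1 / ‖u‖) h
  have hlt := hst u huδ (m+1) (Nat.succ_pos m)
  rw [pow_apply_eigen S huS, norm_smul, norm_pow] at hlt
  have h1 : ‖σ‖ ^ m ≤ ‖σ‖ ^ (m+1) :=
    pow_le_pow_right₀ (le_of_lt h) (Nat.le_succ m)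
  have : (1:ℝ) < ‖σ‖ ^ (m+1) * ‖u‖ := by
    rw [← one_div_mul_cancel (ne_of_gt hun0)]
    exact mul_lt_mul_of_pos_right (lt_of_lt_of_le hm h1) hun0
  linarith

lemma symp_eigen_ne_zero {n : ℕ} {S : Module.End ℂ (SympC n)}
    (hsymp : ∀ x y, omegaStd (S x) (S y) = omegaStd x y)
    {σ : ℂ} (hσ : Module.End.HasEigenvalue S σ) : σ ≠ 0 := by
  rintro rfl
  obtain ⟨v, hv, hv0⟩ := hσ.exists_hasEigenvector
  have hvS : S v = 0 := by simpa using Module.End.mem_eigenspace_iff.mp hv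
  apply hv0
  apply omega_nondeg
  intro y
  rw [← hsymp v y, hvS, omega_zero_left]

lemma symp_eigen_inv {n : ℕ} {S : Module.End ℂ (SympC n)}
    (hsymp : ∀ x y, omegaStd (S x) (S y) = omegaStd x y)
    {σ : ℂ} (hσ : Module.End.HasEigenvalue S σ) : Module.End.HasEigenvalue S σ⁻¹ := by
  have hσ0 : σ ≠ 0 := symp_eigen_ne_zero hsymp hσ
  obtain ⟨v, hv, hv0⟩ := hσ.exists_hasEigenvector
  have hvS : S v = σ • v := Module.End.mem_eigenspace_iff.mp hv
  -- ω(v, S y) = σ⁻¹ ω(v, y)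
  have key : ∀ y, omegaStd v (S y) = σ⁻¹ * omegaStd v y := by
    intro y
    have := hsymp v y
    rw [hvS, omega_smul_left] at this
    field_simp
    linear_combination this
  -- T := S - σ⁻¹ • 1 is not surjective
  set T : Module.End ℂ (SympC n) := S - σ⁻¹ • 1 with hT
  have hTy : ∀ y, omegaStd v (T y) = 0 := by
    intro y
    have : T y = S y - σ⁻¹ • y := by simp [hT, LinearMap.sub_apply]
    rw [this, omega_sub_right, key, omega_smul_right, sub_self]
  obtain ⟨y0, hy0⟩ : ∃ y0, omegaStd v y0 ≠ 0 := by
    by_contra hcon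
    push_neg at hcon
    exact hv0 (omega_nondeg v hcon)
  have hnsurj : ¬ Function.Surjective T := by
    intro hs
    obtain ⟨z, hz⟩ := hs y0
    exact hy0 (hz ▸ hTy z)
  have hninj : ¬ Function.Injective T := fun hi => hnsurj (LinearMap.injective_iff_surjective.mp hi)
  rw [← LinearMap.ker_eq_bot] at hninj
  obtain ⟨w, hw, hw0⟩ := Submodule.exists_mem_ne_zero_of_ne_bot hninj
  refine Module.End.hasEigenvalue_of_hasEigenvector ⟨Module.End.mem_eigenspace_iff.mpr ?_, hw0⟩
  have : T w = 0 := hw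
  have := sub_eq_zero.mp (by simpa [hT, LinearMap.sub_apply] using this)
  simpa using this

lemma stable_symp_abs_one {n : ℕ} {S : Module.End ℂ (SympC n)} (hS : IsStableOp S)
    (hsymp : ∀ x y, omegaStd (S x) (S y) = omegaStd x y)
    {σ : ℂ} (hσ : Module.End.HasEigenvalue S σ) : ‖σ‖ = 1 := by
  have h1 := stable_abs_le_one hS hσ
  have h2 := stable_abs_le_one hS (symp_eigen_inv hsymp hσ)
  have h0 : σ ≠ 0 := symp_eigen_ne_zero hsymp hσ
  rw [norm_inv] at h2
  have habs : 0 < ‖σ‖ := norm_pos_iff.mpr h0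
  have := (inv_le_one₀ habs).mp h2
  linarith

lemma stable_maxGen_le_eigen {n : ℕ} {S : Module.End ℂ (SympC n)} (hS : IsStableOp S)
    (hsymp : ∀ x y, omegaStd (S x) (S y) = omegaStd x y) (μ : ℂ) :
    S.maxGenEigenspace μ ≤ S.eigenspace μ := by
  intro v hv
  by_contra hve
  set N : Module.End ℂ (SympC n) := S - μ • 1 with hN
  have hNapp : ∀ z, N z = S z - μ • z := by intro z; simp [hN]
  have hNv : N v ≠ 0 := by
    rw [hNapp, sub_ne_zero]
    exact fun h => hve (Module.End.mem_eigenspace_iff.mpr h)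
  have hv0 : v ≠ 0 := fun h => hve (h ▸ Submodule.zero_mem _)
  have hex : ∃ k, (N ^ k) v = 0 := (Module.End.mem_maxGenEigenspace S μ v).mp hv
  set k0 := Nat.find hex with hk0
  have hspec : (N ^ k0) v = 0 := Nat.find_spec hex
  have hk00 : k0 ≠ 0 := by intro h; rw [h] at hspec; simp at hspec; exact hv0 hspec
  have hk01 : k0 ≠ 1 := by intro h; rw [h] at hspec; simp at hspec; exact hNv hspec
  obtain ⟨m, hm⟩ : ∃ m, k0 = m + 2 := ⟨k0 - 2, by omega⟩
  set u : SympC n := (N ^ m) v with hu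
  set w : SympC n := (N ^ (m+1)) v with hw
  have hw0 : w ≠ 0 := Nat.find_min hex (by omega)
  have hNw : N w = 0 := by
    have : (N ^ (m+2)) v = 0 := by rw [← hm]; exact hspec
    rwa [pow_succ', Module.End.mul_apply] at this
  have hNu : N u = w := by rw [hw, hu, pow_succ', Module.End.mul_apply]
  have Sw : S w = μ • w := by
    have := hNapp w
    rw [hNw] at this
    exact (sub_eq_zero.mp this.symm)
  have Su : S u = μ • u + w := by
    have := hNapp u
    rw [hNu] at this
    rw [this]; abel
  have hμeig : Module.End.HasEigenvalue S μ :=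
    Module.End.hasEigenvalue_of_hasEigenvector ⟨Module.End.mem_eigenspace_iff.mpr Sw, hw0⟩
  have habs : ‖μ‖ = 1 := stable_symp_abs_one hS hsymp hμeig
  have hpow : ∀ j : ℕ, (S ^ (j+1)) u = μ^(j+1) • u + (((j:ℂ)+1) * μ^j) • w := by
    intro j
    induction j with
    | zero => simpa using Su
    | succ k ih =>
        rw [pow_succ', Module.End.mul_apply, ih, map_add, map_smul, map_smul, Su, Sw]
        push_cast
        module
  -- norms
  obtain ⟨δ, hδ, hst⟩ := hS 1 one_pos
  have hun1 : (0:ℝ) < ‖u‖ + 1 := by positivity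
  set c : ℝ := δ / (2 * (‖u‖ + 1)) with hc
  have hcpos : 0 < c := by positivity
  set uc : SympC n := (c:ℂ) • u with huc
  have hucn : ‖uc‖ = c * ‖u‖ := by
    rw [huc, norm_smul, Complex.norm_real, Real.norm_eq_abs, abs_of_pos hcpos]
  have hucδ : ‖uc‖ < δ := by
    rw [hucn, hc]
    rw [div_mul_eq_mul_div]
    rw [div_lt_iff₀ (by positivity)]
    nlinarith
  have hwn : (0:ℝ) < ‖w‖ := norm_pos_iff.mpr hw0
  obtain ⟨j, hj⟩ := exists_nat_gt ((1/c + ‖u‖)/‖w‖)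
  have hlt := hst uc hucδ (j+1) (Nat.succ_pos j)
  have happ : (S ^ (j+1)) uc = (c:ℂ) • ((μ^(j+1)) • u + (((j:ℂ)+1) * μ^j) • w) := by
    rw [huc, map_smul, hpow]
  rw [happ] at hlt
  have hnormB : ‖(((j:ℂ)+1) * μ^j) • w‖ = ((j:ℝ)+1) * ‖w‖ := by
    rw [norm_smul, norm_mul, norm_pow, habs, one_pow, mul_one]
    norm_num
    left
    rw [← Complex.ofReal_natCast, ← Complex.ofReal_one, ← Complex.ofReal_add,
      Complex.norm_real, Real.norm_eq_abs, abs_of_pos (by positivity)]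
  have hnormA : ‖(μ^(j+1)) • u‖ = ‖u‖ := by
    rw [norm_smul, norm_pow, habs, one_pow, one_mul]
  have hge : ((j:ℝ)+1) * ‖w‖ - ‖u‖ ≤ ‖(μ^(j+1)) • u + (((j:ℂ)+1) * μ^j) • w‖ := by
    have := norm_sub_le ((μ^(j+1)) • u + (((j:ℂ)+1) * μ^j) • w) ((μ^(j+1)) • u)
    simp only [add_sub_cancel_left] at this
    rw [hnormB, hnormA] at this
    linarith
  rw [norm_smul, Complex.norm_real, Real.norm_eq_abs, abs_of_pos hcpos] at hlt
  have hjw : 1/c + ‖u‖ < (j:ℝ) * ‖w‖ := by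
    rw [div_lt_iff₀ hwn] at hj
    linarith
  have hc1 : c * (1/c) = 1 := by field_simp
  nlinarith [mul_le_mul_of_nonneg_left hge (le_of_lt hcpos),
    mul_lt_mul_of_pos_left hjw hcpos]

lemma finrank_SympC (n : ℕ) : Module.finrank ℂ (SympC n) = 2 * n := by
  rw [Module.finrank_prod, Module.finrank_pi]
  simp [Fintype.card_fin]
  ring

lemma exists_eigenbasis {n : ℕ} {S : Module.End ℂ (SympC n)}
    (htop : ⨆ μ : ℂ, S.eigenspace μ = ⊤) :
    ∃ (b : Module.Basis (Fin (2 * n)) ℂ (SympC n)) (μ : Fin (2 * n) → ℂ),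
      ∀ i, S (b i) = μ i • b i := by
  have hind := Module.End.eigenspaces_iSupIndep S
  have hint : DirectSum.IsInternal (fun μ : ℂ => S.eigenspace μ) :=
    DirectSum.isInternal_submodule_of_iSupIndep_of_iSup_eq_top hind htop
  let bases : ∀ μ : ℂ, Module.Basis (Module.Basis.ofVectorSpaceIndex ℂ (S.eigenspace μ)) ℂ (S.eigenspace μ) :=
    fun μ => Module.Basis.ofVectorSpace ℂ _
  let c := hint.collectedBasis bases
  let b0 : Module.Basis (Fin (2 * n)) ℂ (SympC n) :=
    (Module.finBasis ℂ (SympC n)).reindex (finCongr (finrank_SympC n))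
  let e := c.indexEquiv b0
  refine ⟨c.reindex e, fun i => (e.symm i).1, fun i => ?_⟩
  rw [Module.Basis.reindex_apply]
  have hmem := hint.collectedBasis_mem bases (e.symm i)
  exact Module.End.mem_eigenspace_iff.mp hmem

lemma stable_eigen_top {n : ℕ} {S : Module.End ℂ (SympC n)} (hS : IsStableOp S)
    (hsymp : ∀ x y, omegaStd (S x) (S y) = omegaStd x y) :
    ⨆ μ : ℂ, S.eigenspace μ = ⊤ := by
  have h1 := Module.End.iSup_maxGenEigenspace_eq_top S
  have h2 : ⨆ μ : ℂ, S.maxGenEigenspace μ ≤ ⨆ μ : ℂ, S.eigenspace μ :=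
    iSup_mono fun μ => stable_maxGen_le_eigen hS hsymp μ
  exact le_antisymm le_top (h1 ▸ h2)

lemma eigenbasis_stable {n : ℕ} {S : Module.End ℂ (SympC n)}
    (b : Module.Basis (Fin (2 * n)) ℂ (SympC n)) (μ : Fin (2 * n) → ℂ)
    (hb : ∀ i, S (b i) = μ i • b i)
    (habs : ∀ σ : ℂ, Module.End.HasEigenvalue S σ → ‖σ‖ = 1) :
    IsStableOp S := by
  have hμ1 : ∀ i, ‖μ i‖ = 1 := fun i =>
    habs (μ i) (Module.End.hasEigenvalue_of_hasEigenvector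
      ⟨Module.End.mem_eigenspace_iff.mpr (hb i), b.ne_zero i⟩)
  -- coordinate bounds
  set K : Fin (2 * n) → ℝ := fun i => ‖LinearMap.toContinuousLinearMap (b.coord i)‖ with hK
  have hcoord : ∀ i (x : SympC n), ‖b.repr x i‖ ≤ K i * ‖x‖ := by
    intro i x
    have := (LinearMap.toContinuousLinearMap (b.coord i)).le_opNorm x
    simpa [Module.Basis.coord_apply] using this
  set C : ℝ := ∑ i, K i * ‖b i‖ with hC
  have hC0 : 0 ≤ C := Finset.sum_nonneg fun i _ => by positivity
  have key : ∀ (x : SympC n) (m : ℕ), ‖(S ^ m) x‖ ≤ C * ‖x‖ := by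
    intro x m
    have hrepr : (S ^ m) x = ∑ i, (b.repr x i * μ i ^ m) • b i := by
      conv_lhs => rw [← b.sum_repr x]
      rw [map_sum]
      refine Finset.sum_congr rfl fun i _ => ?_
      rw [map_smul, pow_apply_eigen S (hb i) m, smul_smul]
    rw [hrepr]
    calc ‖∑ i, (b.repr x i * μ i ^ m) • b i‖
        ≤ ∑ i, ‖(b.repr x i * μ i ^ m) • b i‖ := norm_sum_le _ _
      _ ≤ ∑ i, (K i * ‖b i‖) * ‖x‖ := by
          refine Finset.sum_le_sum fun i _ => ?_
          rw [norm_smul, norm_mul, norm_pow, hμ1, one_pow, mul_one]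
          calc ‖b.repr x i‖ * ‖b i‖
              ≤ (K i * ‖x‖) * ‖b i‖ :=
                mul_le_mul_of_nonneg_right (hcoord i x) (norm_nonneg _)
            _ = (K i * ‖b i‖) * ‖x‖ := by ring
      _ = C * ‖x‖ := by rw [hC, Finset.sum_mul]
  intro ε hε
  refine ⟨ε / (C + 1), by positivity, fun x hx m _ => ?_⟩
  calc ‖(S ^ m) x‖ ≤ C * ‖x‖ := key x m
    _ ≤ (C + 1) * ‖x‖ := by nlinarith [norm_nonneg x]
    _ < (C + 1) * (ε / (C + 1)) := by
        exact mul_lt_mul_of_pos_left hx (by positivity)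
    _ = ε := by field_simp


/-- a symplectic linear operator on ℂ^{2n} is stable iff it is
diagonalizable and all of its eigenvalues have absolute value 1. -/
theorem symplectic_stable_iff_diagonalizable_unit_spectrum
    {n : ℕ} (S : Module.End ℂ (SympC n))
    (hsymp : ∀ x y, omegaStd (S x) (S y) = omegaStd x y) :
    IsStableOp S ↔
      ((∃ (b : Module.Basis (Fin (2 * n)) ℂ (SympC n)) (μ : Fin (2 * n) → ℂ),
          ∀ i, S (b i) = μ i • b i) ∧
        ∀ σ : ℂ, Module.End.HasEigenvalue S σ → ‖σ‖ = 1) := by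
  constructor
  · intro hS
    exact ⟨exists_eigenbasis (stable_eigen_top hS hsymp),
      fun σ hσ => stable_symp_abs_one hS hsymp hσ⟩
  · rintro ⟨⟨b, μ, hb⟩, habs⟩
    exact eigenbasis_stable b μ hb habs
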